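/- Suppose the irreducibility hypothesis (I) holds. Then, almost surely, the limit set C_∞ = ∪_{m≥0} C_m of the IDLA clusters equals all of ℤ. -/

import Mathlib

open MeasureTheory ProbabilityTheory Filter Topology Set

noncomputable section

namespace IDLAPaper

variable {Ω : Type*}

/-- The `m`-th walker (0-indexed), started at `0`, with increments `ξ (m, ·)`. -/
def walkOf (ξ : ℕ × ℕ → Ω → ℤ) (m n : ℕ) (ω : Ω) : ℤ :=
  ∑ i ∈ Finset.range n, ξ (m, i) ω

/-- The IDLA clusters: `cluster ξ ω m` is the cluster after `m` walkers have been dispatched.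
The `(m+1)`-st cluster is obtained by adding the first site outside the current cluster
visited by the `m`-th walker (0-indexed). -/
def cluster (ξ : ℕ × ℕ → Ω → ℤ) (ω : Ω) : ℕ → Set ℤ
  | 0 => {0}
  | m + 1 =>
      cluster ξ ω m ∪
        {walkOf ξ m (sInf {n : ℕ | walkOf ξ m n ω ∉ cluster ξ ω m}) ω}

/-- The inner radius `r_m`: the radius of the maximal centred interval inside the cluster. -/
def innerRadius (ξ : ℕ × ℕ → Ω → ℤ) (ω : Ω) (m : ℕ) : ℕ :=
  sSup {r : ℕ | ∀ z : ℤ, |z| ≤ (r : ℤ) → z ∈ cluster ξ ω m}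

/-- The coverage time `σ_x = inf { m : r_m ≥ x }`. -/
def covTime (ξ : ℕ × ℕ → Ω → ℤ) (ω : Ω) (x : ℝ) : ℕ :=
  sInf {m : ℕ | x ≤ (innerRadius ξ ω m : ℝ)}

/-- The whole array of increments is i.i.d. under `P`. -/
def IsIID [MeasurableSpace Ω] (P : Measure Ω) (ξ : ℕ × ℕ → Ω → ℤ) : Prop :=
  (∀ p, Measurable (ξ p)) ∧ iIndepFun ξ P ∧
    ∀ p, Measure.map (ξ p) P = Measure.map (ξ (0, 0)) P

/-- Hypothesis (I): irreducibility of the driving random walk on `ℤ`. -/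
def HypI [MeasurableSpace Ω] (P : Measure Ω) (ξ : ℕ × ℕ → Ω → ℤ) : Prop :=
  ∀ x y : ℤ, ∃ n : ℕ, 0 < n ∧ 0 < P {ω | x + walkOf ξ 0 n ω = y}

/-- Hypothesis (S_α): symmetric increments in the domain of normal attraction of a
symmetric `α`-stable law, stated via the characteristic function. -/
def HypS [MeasurableSpace Ω] (P : Measure Ω) (ξ : ℕ × ℕ → Ω → ℤ) (α : ℝ) : Prop :=
  Measure.map (fun ω => -ξ (0, 0) ω) P = Measure.map (ξ (0, 0)) P ∧
    ∃ β : ℝ, 0 < β ∧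
      Tendsto (fun t : ℝ =>
          ((|t| ^ (-α) : ℝ) : ℂ) *
            (1 - ∫ ω, Complex.exp (Complex.I * (t : ℂ) * ((ξ (0, 0) ω : ℤ) : ℂ)) ∂P))
        (𝓝[≠] (0 : ℝ)) (𝓝 ((β : ℝ) : ℂ))

lemma cluster_mono (ξ : ℕ × ℕ → Ω → ℤ) (ω : Ω) : Monotone (cluster ξ ω) :=
  monotone_nat_of_le_succ fun m => by rw [cluster]; exact Set.subset_union_left

lemma zero_mem_cluster (ξ : ℕ × ℕ → Ω → ℤ) (ω : Ω) (m : ℕ) : (0 : ℤ) ∈ cluster ξ ω m :=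
  cluster_mono ξ ω (Nat.zero_le m) (by rw [cluster]; exact rfl)

lemma step_lemma (ξ : ℕ × ℕ → Ω → ℤ) (ω : Ω) {n : ℕ} {vv : ℕ → ℤ} {m : ℕ}
    (hE : ∀ i < n, ξ (m, i) ω = vv i)
    (hz : (∑ i ∈ Finset.range n, vv i) ∉ cluster ξ ω m) :
    ∃ k, 1 ≤ k ∧ k ≤ n ∧ (∑ i ∈ Finset.range k, vv i) ∉ cluster ξ ω m ∧
      (∑ i ∈ Finset.range k, vv i) ∈ cluster ξ ω (m + 1) := by
  have hwalk : ∀ k ≤ n, walkOf ξ m k ω = ∑ i ∈ Finset.range k, vv i := by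
    intro k hk
    exact Finset.sum_congr rfl fun i hi =>
      hE i (lt_of_lt_of_le (Finset.mem_range.1 hi) hk)
  set T := {j : ℕ | walkOf ξ m j ω ∉ cluster ξ ω m} with hT
  have hnT : n ∈ T := by
    show walkOf ξ m n ω ∉ cluster ξ ω m
    rw [hwalk n le_rfl]; exact hz
  have hmem : sInf T ∈ T := Nat.sInf_mem ⟨n, hnT⟩
  have hle : sInf T ≤ n := Nat.sInf_le hnT
  have hpos : 1 ≤ sInf T := by
    rw [Nat.one_le_iff_ne_zero]
    intro h0
    have h1 : walkOf ξ m 0 ω ∉ cluster ξ ω m := by rw [← h0]; exact hmem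
    apply h1
    have : walkOf ξ m 0 ω = 0 := by simp [walkOf]
    rw [this]; exact zero_mem_cluster ξ ω m
  refine ⟨sInf T, hpos, hle, ?_, ?_⟩
  · rw [← hwalk _ hle]; exact hmem
  · rw [← hwalk _ hle]
    rw [cluster]
    exact Set.mem_union_right _ rfl

lemma fills (ξ : ℕ × ℕ → Ω → ℤ) (ω : Ω) {n : ℕ} {vv : ℕ → ℤ} {z : ℤ}
    (hsum : ∑ i ∈ Finset.range n, vv i = z)
    (hfreq : ∃ᶠ m in atTop, ∀ i < n, ξ (m, i) ω = vv i) :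
    z ∈ ⋃ m, cluster ξ ω m := by
  classical
  by_contra hz
  simp only [Set.mem_iUnion, not_exists] at hz
  set F : Finset ℤ := (Finset.range n).image (fun k => ∑ i ∈ Finset.range (k + 1), vv i)
    with hF
  have key : ∀ j : ℕ, ∃ m, j ≤ (F.filter (· ∈ cluster ξ ω m)).card := by
    intro j
    induction j with
    | zero => exact ⟨0, Nat.zero_le _⟩
    | succ j ih =>
      obtain ⟨m, hm⟩ := ih
      obtain ⟨m', hmm', hE⟩ := (frequently_atTop.1 hfreq) m
      have hzz : (∑ i ∈ Finset.range n, vv i) ∉ cluster ξ ω m' := by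
        rw [hsum]; exact hz m'
      obtain ⟨k, hk1, hkn, hnotin, hin⟩ := step_lemma ξ ω hE hzz
      have hpF : (∑ i ∈ Finset.range k, vv i) ∈ F := by
        refine Finset.mem_image.2 ⟨k - 1, Finset.mem_range.2 (by omega), ?_⟩
        have hk : k - 1 + 1 = k := by omega
        rw [hk]
      have hsub1 : F.filter (· ∈ cluster ξ ω m) ⊆ F.filter (· ∈ cluster ξ ω m') := by
        intro p hp
        rcases Finset.mem_filter.1 hp with ⟨h1, h2⟩
        exact Finset.mem_filter.2 ⟨h1, cluster_mono ξ ω hmm' h2⟩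
      have hsub2 : insert (∑ i ∈ Finset.range k, vv i) (F.filter (· ∈ cluster ξ ω m')) ⊆
          F.filter (· ∈ cluster ξ ω (m' + 1)) := by
        intro p hp
        rcases Finset.mem_insert.1 hp with rfl | hp
        · exact Finset.mem_filter.2 ⟨hpF, hin⟩
        · rcases Finset.mem_filter.1 hp with ⟨h1, h2⟩
          exact Finset.mem_filter.2 ⟨h1, cluster_mono ξ ω (Nat.le_succ m') h2⟩
      have hnot : (∑ i ∈ Finset.range k, vv i) ∉ F.filter (· ∈ cluster ξ ω m') := by
        intro hmem
        exact hnotin (Finset.mem_filter.1 hmem).2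
      have hcard1 : (F.filter (· ∈ cluster ξ ω m)).card ≤
          (F.filter (· ∈ cluster ξ ω m')).card := Finset.card_le_card hsub1
      have hcard2 :
          (insert (∑ i ∈ Finset.range k, vv i) (F.filter (· ∈ cluster ξ ω m'))).card =
            (F.filter (· ∈ cluster ξ ω m')).card + 1 :=
        Finset.card_insert_of_notMem hnot
      have hcard3 := Finset.card_le_card hsub2
      exact ⟨m' + 1, by omega⟩
  obtain ⟨m, hm⟩ := key (F.card + 1)
  have := Finset.card_filter_le F (· ∈ cluster ξ ω m)
  omega


theorem idla_fills_Z_aux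
    [MeasurableSpace Ω] (P : Measure Ω) [IsProbabilityMeasure P]
    (ξ : ℕ × ℕ → Ω → ℤ)
    (hmeas : ∀ p, Measurable (ξ p))
    (hind : iIndepFun ξ P)
    (hid : ∀ p, Measure.map (ξ p) P = Measure.map (ξ (0, 0)) P)
    (hI : ∀ x y : ℤ, ∃ n : ℕ, 0 < n ∧ 0 < P {ω | x + walkOf ξ 0 n ω = y}) :
    ∀ᵐ ω ∂P, (⋃ m : ℕ, cluster ξ ω m) = Set.univ := by
  have key : ∀ z : ℤ, ∀ᵐ ω ∂P, z ∈ ⋃ m, cluster ξ ω m := by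
    intro z
    obtain ⟨n, hn0, hpos⟩ := hI 0 z
    simp only [zero_add] at hpos
    have hcover : {ω | walkOf ξ 0 n ω = z} ⊆
        ⋃ v : Fin n → ℤ,
          ({ω | walkOf ξ 0 n ω = z} ∩ ⋂ i : Fin n, {ω | ξ (0, (i : ℕ)) ω = v i}) :=
      fun ω hω =>
        Set.mem_iUnion.2 ⟨fun i => ξ (0, (i : ℕ)) ω, hω, Set.mem_iInter.2 fun _ => rfl⟩
    have hex : ∃ v : Fin n → ℤ,
        P ({ω | walkOf ξ 0 n ω = z} ∩ ⋂ i : Fin n, {ω | ξ (0, (i : ℕ)) ω = v i}) ≠ 0 := by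
      by_contra h
      push_neg at h
      have h0 : P {ω | walkOf ξ 0 n ω = z} = 0 :=
        measure_mono_null hcover (measure_iUnion_null h)
      rw [h0] at hpos; exact lt_irrefl _ hpos
    obtain ⟨v, hv⟩ := hex
    set vv : ℕ → ℤ := fun i => if h : i < n then v ⟨i, h⟩ else 0 with hvv
    obtain ⟨ω₀, hω₀⟩ := nonempty_of_measure_ne_zero hv
    have hω₀A : ∀ i : Fin n, ξ (0, (i : ℕ)) ω₀ = v i := fun i => Set.mem_iInter.1 hω₀.2 i
    have hsum : ∑ i ∈ Finset.range n, vv i = z := by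
      rw [← show walkOf ξ 0 n ω₀ = z from hω₀.1]
      refine Finset.sum_congr rfl fun i hi => ?_
      have hi' := Finset.mem_range.1 hi
      simp only [hvv, dif_pos hi']
      exact (hω₀A ⟨i, hi'⟩).symm
    set A : ℕ → Set Ω := fun m => ⋂ i ∈ Finset.range n, ξ (m, i) ⁻¹' {vv i} with hA
    have hsubA : ({ω | walkOf ξ 0 n ω = z} ∩ ⋂ i : Fin n, {ω | ξ (0, (i : ℕ)) ω = v i})
        ⊆ A 0 := by
      intro ω hω
      refine Set.mem_iInter₂.2 fun i hi => ?_
      have hi' := Finset.mem_range.1 hi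
      have h1 : ξ (0, i) ω = v ⟨i, hi'⟩ := Set.mem_iInter.1 hω.2 ⟨i, hi'⟩
      simp only [Set.mem_preimage, Set.mem_singleton_iff, hvv, dif_pos hi']
      exact h1
    have hA0 : P (A 0) ≠ 0 := fun h => hv (measure_mono_null hsubA h)
    have hmeasA : ∀ m, MeasurableSet (A m) := fun m =>
      MeasurableSet.biInter (Finset.range n).countable_toSet
        fun i _ => hmeas (m, i) (measurableSet_singleton (vv i))
    have hAeq : ∀ S : Finset ℕ,
        (⋂ m ∈ S, A m) = ⋂ p ∈ S ×ˢ Finset.range n, ξ p ⁻¹' {vv p.2} := by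
      intro S
      ext ω
      simp only [hA, Set.mem_iInter, Finset.mem_product, Set.mem_preimage,
        Set.mem_singleton_iff]
      constructor
      · rintro h ⟨m, i⟩ ⟨h1, h2⟩
        exact h m h1 i h2
      · intro h m h1 i h2
        exact h (m, i) ⟨h1, h2⟩
    have hmapeq : ∀ p : ℕ × ℕ, ∀ y : ℤ, P (ξ p ⁻¹' {y}) = P (ξ (0, 0) ⁻¹' {y}) := by
      intro p y
      rw [← Measure.map_apply (hmeas p) (measurableSet_singleton _), hid p,
        Measure.map_apply (hmeas (0, 0)) (measurableSet_singleton _)]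
    have hAm : ∀ m, P (A m) = ∏ i ∈ Finset.range n, P (ξ (m, i) ⁻¹' {vv i}) := by
      intro m
      have h1 : A m = ⋂ p ∈ ({m} : Finset ℕ) ×ˢ Finset.range n, ξ p ⁻¹' {vv p.2} := by
        rw [← hAeq]
        simp
      rw [h1, hind.measure_inter_preimage_eq_mul (({m} : Finset ℕ) ×ˢ Finset.range n)
        (fun p _ => measurableSet_singleton (vv p.2)), Finset.prod_product,
        Finset.prod_singleton]
    have hPAm : ∀ m, P (A m) = P (A 0) := by
      intro m
      rw [hAm m, hAm 0]
      exact Finset.prod_congr rfl fun i _ =>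
        (hmapeq (m, i) (vv i)).trans (hmapeq (0, i) (vv i)).symm
    have hindepA : iIndepSet A P := by
      refine (iIndepSet_iff_meas_biInter hmeasA).2 fun S => ?_
      rw [hAeq S, hind.measure_inter_preimage_eq_mul (S ×ˢ Finset.range n)
        (fun p _ => measurableSet_singleton (vv p.2)), Finset.prod_product]
      exact Finset.prod_congr rfl fun m _ => (hAm m).symm
    have htsum : (∑' m, P (A m)) = ⊤ := by
      rw [tsum_congr hPAm]
      exact ENNReal.tsum_const_eq_top_of_ne_zero hA0
    have hone := measure_limsup_eq_one hmeasA hindepA htsum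
    have hae : ∀ᵐ ω ∂P, ω ∈ limsup A atTop := by
      rw [ae_iff]
      have h2 : {ω | ¬ ω ∈ limsup A atTop} = (limsup A atTop)ᶜ := rfl
      rw [h2, prob_compl_eq_zero_iff (MeasurableSet.measurableSet_limsup hmeasA)]
      exact hone
    filter_upwards [hae] with ω hω
    apply fills ξ ω hsum
    refine (Filter.mem_limsup_iff_frequently_mem.1 hω).mono fun m hm i hi => ?_
    exact Set.mem_iInter₂.1 hm i (Finset.mem_range.2 hi)
  have hall : ∀ᵐ ω ∂P, ∀ z : ℤ, z ∈ ⋃ m, cluster ξ ω m := (ae_all_iff).2 key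
  filter_upwards [hall] with ω hω
  exact Set.eq_univ_of_forall hω

/-- **Proposition 1.1**: under irreducibility, almost surely the limit set
`C_∞ = ⋃ₘ C_m` of the IDLA clusters is all of `ℤ`. -/
theorem idla_fills_Z
    [MeasurableSpace Ω] (P : Measure Ω) [IsProbabilityMeasure P]
    (ξ : ℕ × ℕ → Ω → ℤ) (hiid : IsIID P ξ) (hI : HypI P ξ) :
    ∀ᵐ ω ∂P, (⋃ m : ℕ, cluster ξ ω m) = Set.univ := by
  obtain ⟨hmeas, hind, hid⟩ := hiid
  exact idla_fills_Z_aux P ξ hmeas hind hid hI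

end IDLAPaper
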